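/- Delayed entanglement attack: let |ψ₀⟩ = Σ_{i,j∈{0,1}} α_{i,j}|i,j⟩ ⊗ |c_{i,j}⟩ with Σ|α_{i,j}|² = 1 and each |c_{i,j}⟩ normalized, and define ρ = p_R |ψ₀⟩⟨ψ₀| + p_M Σ_{i,j}|α_{i,j}|² |i,j,c_{i,j}⟩⟨i,j,c_{i,j}| and ρ' = p_R |ψ₀'⟩⟨ψ₀'|⊗|0⟩⟨0|_C + p_M Σ_{i,j}|α_{i,j}|² |i,j⟩⟨i,j|⊗|0⟩⟨0|_C, where |ψ₀'⟩ = Σ α_{i,j}|i,j⟩. Then there exists a unitary V on the joint space with V|i,j,0⟩ = |i,j,c_{i,j}⟩ for all i,j, and V ρ' V* = ρ. -/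

import Mathlib

open Matrix

private lemma aux_unit {m : ℕ} (a b : Fin m → ℂ)
    (ha : star a ⬝ᵥ a = 1) (hb : star b ⬝ᵥ b = 1) :
    ∃ U : Matrix (Fin m) (Fin m) ℂ,
      U ∈ Matrix.unitaryGroup (Fin m) ℂ ∧ U *ᵥ a = b := by
  have hm : 0 < m := by
    rcases Nat.eq_zero_or_pos m with h | h
    · subst h
      simp [dotProduct] at ha
    · exact h
  haveI : NeZero m := ⟨hm.ne'⟩
  have hcard : Module.finrank ℂ (EuclideanSpace ℂ (Fin m)) = Fintype.card (Fin m) := by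
    simp [finrank_euclideanSpace]
  have horth : ∀ (x : Fin m → ℂ), star x ⬝ᵥ x = 1 →
      Orthonormal ℂ (Set.restrict ({0} : Set (Fin m))
        (fun _ : Fin m => ((WithLp.equiv 2 _).symm x : EuclideanSpace ℂ (Fin m)))) := by
    intro x hx
    rw [orthonormal_iff_ite]
    intro i j
    have hij : i = j := Subtype.ext (i.2.trans j.2.symm)
    subst hij
    simp only [if_pos rfl, Set.restrict_apply, PiLp.inner_apply, RCLike.inner_apply,
      PiLp.toLp_apply]
    simpa [dotProduct, mul_comm, Set.restrict] using hx
  obtain ⟨A, hA⟩ := Orthonormal.exists_orthonormalBasis_extension_of_card_eq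
    (𝕜 := ℂ) hcard (horth a ha)
  obtain ⟨B, hB⟩ := Orthonormal.exists_orthonormalBasis_extension_of_card_eq
    (𝕜 := ℂ) hcard (horth b hb)
  have hA0 : ∀ i, A 0 i = a i := by
    intro i; rw [hA 0 rfl]; rfl
  have hB0 : ∀ i, B 0 i = b i := by
    intro i; rw [hB 0 rfl]; rfl
  have hinner : ∀ (C : OrthonormalBasis (Fin m) ℂ (EuclideanSpace ℂ (Fin m))) (k l : Fin m),
      (∑ i, (starRingEnd ℂ) (C k i) * C l i) = if k = l then 1 else 0 := by
    intro C k l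
    have := (orthonormal_iff_ite.mp C.orthonormal) k l
    simpa [PiLp.inner_apply, RCLike.inner_apply, mul_comm] using this
  set MA : Matrix (Fin m) (Fin m) ℂ := Matrix.of fun i k => A k i with hMA
  set MB : Matrix (Fin m) (Fin m) ℂ := Matrix.of fun i k => B k i with hMB
  have hAU : MA ∈ Matrix.unitaryGroup (Fin m) ℂ := by
    rw [Matrix.mem_unitaryGroup_iff']
    ext k l
    simpa [Matrix.mul_apply, Matrix.conjTranspose_apply, hMA, Matrix.one_apply]
      using hinner A k l
  have hBU : MB ∈ Matrix.unitaryGroup (Fin m) ℂ := by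
    rw [Matrix.mem_unitaryGroup_iff']
    ext k l
    simpa [Matrix.mul_apply, Matrix.conjTranspose_apply, hMB, Matrix.one_apply]
      using hinner B k l
  refine ⟨MB * MAᴴ, mul_mem hBU (Unitary.star_mem hAU), ?_⟩
  have h1 : MAᴴ *ᵥ a = fun k => if k = 0 then 1 else 0 := by
    ext k
    have := hinner A k 0
    simp only [Matrix.mulVec, dotProduct, Matrix.conjTranspose_apply, hMA,
      Matrix.of_apply]
    calc ∑ i, (starRingEnd ℂ) (A k i) * a i
        = ∑ i, (starRingEnd ℂ) (A k i) * A 0 i := by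
          refine Finset.sum_congr rfl fun i _ => by rw [hA0]
      _ = if k = 0 then 1 else 0 := this
  rw [← Matrix.mulVec_mulVec, h1]
  ext i
  simp [Matrix.mulVec, dotProduct, hMB, hB0]

private lemma conj_vecMulVec {n : Type*} [Fintype n] (V : Matrix n n ℂ) (x : n → ℂ) :
    V * vecMulVec x (star x) * Vᴴ = vecMulVec (V *ᵥ x) (star (V *ᵥ x)) := by
  ext i j
  simp only [Matrix.mul_apply, vecMulVec_apply, Matrix.conjTranspose_apply, Pi.star_apply,
    Matrix.mulVec, dotProduct, star_sum, star_mul', Finset.sum_mul, Finset.mul_sum]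
  refine Finset.sum_congr rfl fun k _ => Finset.sum_congr rfl fun l _ => by ring

theorem stmt5 {m : ℕ}
    (c : Fin 2 → Fin 2 → (Fin m → ℂ)) (hc : ∀ i j, star (c i j) ⬝ᵥ c i j = 1)
    (e₀ : Fin m → ℂ) (he₀ : star e₀ ⬝ᵥ e₀ = 1)
    (α : Fin 2 → Fin 2 → ℂ) (hα : ∑ i, ∑ j, Complex.normSq (α i j) = 1)
    (pR pM : ℝ) (hpR : 0 ≤ pR) (hpM : 0 ≤ pM) (hsum : pR + pM = 1)
    (ψ₀ : (Fin 2 × Fin 2) × Fin m → ℂ)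
    (hψ₀ : ψ₀ = fun q => α q.1.1 q.1.2 * c q.1.1 q.1.2 q.2)
    (ψ₀' : (Fin 2 × Fin 2) × Fin m → ℂ)
    (hψ₀' : ψ₀' = fun q => α q.1.1 q.1.2 * e₀ q.2)
    -- |i,j,c_{i,j}⟩ :
    (v : Fin 2 → Fin 2 → ((Fin 2 × Fin 2) × Fin m → ℂ))
    (hv : ∀ i j, v i j = fun q => if q.1 = (i, j) then c i j q.2 else 0)
    -- |i,j,0⟩ :
    (w : Fin 2 → Fin 2 → ((Fin 2 × Fin 2) × Fin m → ℂ))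
    (hw : ∀ i j, w i j = fun q => if q.1 = (i, j) then e₀ q.2 else 0)
    (ρ ρ' : Matrix ((Fin 2 × Fin 2) × Fin m) ((Fin 2 × Fin 2) × Fin m) ℂ)
    (hρ : ρ = pR • vecMulVec ψ₀ (star ψ₀)
        + pM • ∑ i, ∑ j, Complex.normSq (α i j) • vecMulVec (v i j) (star (v i j)))
    (hρ' : ρ' = pR • vecMulVec ψ₀' (star ψ₀')
        + pM • ∑ i, ∑ j, Complex.normSq (α i j) • vecMulVec (w i j) (star (w i j))) :
    ∃ V : Matrix ((Fin 2 × Fin 2) × Fin m) ((Fin 2 × Fin 2) × Fin m) ℂ,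
      V ∈ Matrix.unitaryGroup ((Fin 2 × Fin 2) × Fin m) ℂ ∧
      (∀ i j, V *ᵥ w i j = v i j) ∧
      V * ρ' * Vᴴ = ρ := by
  have hU : ∀ i j, ∃ U : Matrix (Fin m) (Fin m) ℂ,
      U ∈ Matrix.unitaryGroup (Fin m) ℂ ∧ U *ᵥ e₀ = c i j :=
    fun i j => aux_unit e₀ (c i j) he₀ (hc i j)
  choose U hUmem hUe using hU
  set V : Matrix ((Fin 2 × Fin 2) × Fin m) ((Fin 2 × Fin 2) × Fin m) ℂ :=
    Matrix.of fun q r => if q.1 = r.1 then U q.1.1 q.1.2 q.2 r.2 else 0 with hVdef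
  have hUcol : ∀ (i j : Fin 2) (k l : Fin m),
      (∑ t, (starRingEnd ℂ) (U i j t k) * U i j t l) = if k = l then 1 else 0 := by
    intro i j k l
    have h := (Matrix.mem_unitaryGroup_iff'.mp (hUmem i j))
    have := congrFun (congrFun h k) l
    simpa [Matrix.mul_apply, Matrix.conjTranspose_apply, Matrix.one_apply] using this
  have hVmem : V ∈ Matrix.unitaryGroup ((Fin 2 × Fin 2) × Fin m) ℂ := by
    rw [Matrix.mem_unitaryGroup_iff']
    ext ⟨p, k⟩ ⟨q, l⟩
    simp only [Matrix.mul_apply, Matrix.conjTranspose_apply, hVdef, Matrix.of_apply,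
      Matrix.star_apply]
    rw [Fintype.sum_prod_type]
    rw [Finset.sum_eq_single_of_mem p (Finset.mem_univ p)
      (fun r _ hr => Finset.sum_eq_zero fun t _ => by simp [if_neg hr])]
    by_cases hpq : p = q
    · subst hpq
      simp [hUcol, Matrix.one_apply, Prod.ext_iff]
    · simp [hpq, Matrix.one_apply, Prod.ext_iff]
  have hVw : ∀ i j, V *ᵥ w i j = v i j := by
    intro i j
    ext ⟨p, k⟩
    rw [hw, hv]
    simp only [Matrix.mulVec, dotProduct, hVdef, Matrix.of_apply]
    rw [Fintype.sum_prod_type]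
    rw [Finset.sum_eq_single_of_mem p (Finset.mem_univ p)
      (fun q _ hq => Finset.sum_eq_zero fun t _ => by simp [if_neg (Ne.symm hq)])]
    simp only [ite_true, if_pos rfl]
    have hcol := congrFun (hUe i j) k
    simp only [Matrix.mulVec, dotProduct] at hcol
    by_cases hp : p = (i, j)
    · subst hp
      simpa using hcol
    · simp [hp]
  have hVψ : V *ᵥ ψ₀' = ψ₀ := by
    ext q
    obtain ⟨p, k⟩ := q
    rw [hψ₀', hψ₀]
    simp only [Matrix.mulVec, dotProduct, hVdef, Matrix.of_apply]
    rw [Fintype.sum_prod_type]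
    have hcol := congrFun (hUe p.1 p.2) k
    simp only [Matrix.mulVec, dotProduct] at hcol
    rw [Finset.sum_eq_single_of_mem p (Finset.mem_univ p)
      (fun q _ hq => Finset.sum_eq_zero fun t _ => by simp [if_neg (Ne.symm hq)])]
    simp only [ite_true, if_pos rfl]
    rw [show (∑ t, U p.1 p.2 k t * (α p.1 p.2 * e₀ t))
        = α p.1 p.2 * ∑ t, U p.1 p.2 k t * e₀ t from by
      rw [Finset.mul_sum]; exact Finset.sum_congr rfl fun t _ => by ring, hcol]
  refine ⟨V, hVmem, hVw, ?_⟩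
  rw [hρ, hρ']
  simp only [Matrix.add_mul, Matrix.mul_add, Matrix.smul_mul, Matrix.mul_smul,
    Matrix.sum_mul, Matrix.mul_sum]
  rw [conj_vecMulVec, hVψ]
  congr 1
  congr 1
  refine Finset.sum_congr rfl fun i _ => Finset.sum_congr rfl fun j _ => ?_
  rw [conj_vecMulVec, hVw]
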